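/- Strengthened Cauchy–Bunyakowski–Schwarz inequality: Given a real Hilbert space V and two finite-dimensional subspaces V₁, V₂ ⊂ V with V₁ ∩ V₂ = {0}, there exists a constant 0 ≤ α < 1 such that |(v₁, v₂)| ≤ α ‖v₁‖ ‖v₂‖ for all v₁ ∈ V₁ and v₂ ∈ V₂. -/
import Mathlib

open RealInnerProductSpace

/-- Strengthened Cauchy–Bunyakowski–Schwarz inequality: for finite-dimensional
subspaces `V₁, V₂` of a real Hilbert space with trivial intersection, there is
`0 ≤ α < 1` with `|(v₁, v₂)| ≤ α ‖v₁‖ ‖v₂‖` for all `v₁ ∈ V₁`, `v₂ ∈ V₂`. -/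
theorem strengthened_CBS {V : Type*} [NormedAddCommGroup V] [InnerProductSpace ℝ V]
    [CompleteSpace V] (V₁ V₂ : Submodule ℝ V)
    [FiniteDimensional ℝ V₁] [FiniteDimensional ℝ V₂]
    (h : V₁ ⊓ V₂ = ⊥) :
    ∃ α : ℝ, 0 ≤ α ∧ α < 1 ∧
      ∀ v₁ ∈ V₁, ∀ v₂ ∈ V₂, |⟪v₁, v₂⟫| ≤ α * ‖v₁‖ * ‖v₂‖ := by
  by_cases h1 : V₁ = ⊥
  · refine ⟨0, le_refl _, one_pos, ?_⟩
    intro v₁ hv₁ v₂ hv₂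
    have : v₁ = 0 := by simpa [h1] using hv₁
    simp [this]
  by_cases h2 : V₂ = ⊥
  · refine ⟨0, le_refl _, one_pos, ?_⟩
    intro v₁ hv₁ v₂ hv₂
    have : v₂ = 0 := by simpa [h2] using hv₂
    simp [this]
  have : Nontrivial V₁ := Submodule.nontrivial_iff_ne_bot.mpr h1
  have : Nontrivial V₂ := Submodule.nontrivial_iff_ne_bot.mpr h2
  -- spheres
  set S₁ : Set V := Subtype.val '' (Metric.sphere (0 : V₁) 1) with hS₁
  set S₂ : Set V := Subtype.val '' (Metric.sphere (0 : V₂) 1) with hS₂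
  have hS₁mem : ∀ x ∈ S₁, x ∈ V₁ ∧ ‖x‖ = 1 := by
    rintro x ⟨a, ha, rfl⟩
    exact ⟨a.2, by simpa using mem_sphere_zero_iff_norm.mp ha⟩
  have hS₂mem : ∀ x ∈ S₂, x ∈ V₂ ∧ ‖x‖ = 1 := by
    rintro x ⟨a, ha, rfl⟩
    exact ⟨a.2, by simpa using mem_sphere_zero_iff_norm.mp ha⟩
  have hc1 : IsCompact S₁ := (isCompact_sphere (0 : V₁) 1).image continuous_subtype_val
  have hc2 : IsCompact S₂ := (isCompact_sphere (0 : V₂) 1).image continuous_subtype_val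
  have hne1 : S₁.Nonempty := ((NormedSpace.sphere_nonempty.mpr zero_le_one).image _)
  have hne2 : S₂.Nonempty := ((NormedSpace.sphere_nonempty.mpr zero_le_one).image _)
  have hK : IsCompact (S₁ ×ˢ S₂) := hc1.prod hc2
  have hKne : (S₁ ×ˢ S₂).Nonempty := hne1.prod hne2
  have hf : Continuous fun p : V × V => |⟪p.1, p.2⟫| :=
    continuous_abs.comp continuous_inner
  obtain ⟨p, hpK, hmax⟩ := hK.exists_isMaxOn hKne hf.continuousOn
  obtain ⟨hx1, hx2⟩ := hS₁mem p.1 hpK.1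
  obtain ⟨hy1, hy2⟩ := hS₂mem p.2 hpK.2
  have hxne : p.1 ≠ 0 := by intro hh; rw [hh] at hx2; simp at hx2
  refine ⟨|⟪p.1, p.2⟫|, abs_nonneg _, ?_, ?_⟩
  · -- strict inequality
    have hxy : p.1 ≠ p.2 := by
      intro hh
      apply hxne
      have : p.1 ∈ V₁ ⊓ V₂ := ⟨hx1, hh ▸ hy1⟩
      simpa [h] using this
    have hxy' : p.1 ≠ -p.2 := by
      intro hh
      apply hxne
      have : p.1 ∈ V₁ ⊓ V₂ := ⟨hx1, hh ▸ (V₂.neg_mem hy1)⟩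
      simpa [h] using this
    rw [abs_lt]
    constructor
    · have := inner_lt_norm_mul_iff_real (F := V) (x := p.1) (y := -p.2)
      simp only [norm_neg, hx2, hy2, one_smul, inner_neg_right] at this
      have h' : ⟪p.1, p.2⟫ > -1 := by
        rcases this.mpr (by simpa using hxy') with hlt
        linarith
      linarith
    · have := inner_lt_norm_mul_iff_real (F := V) (x := p.1) (y := p.2)
      simp only [hx2, hy2, one_smul] at this
      exact by simpa using this.mpr hxy
  · intro v₁ hv₁ v₂ hv₂
    by_cases hz1 : v₁ = 0
    · simp [hz1]
    by_cases hz2 : v₂ = 0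
    · simp [hz2]
    have hn1 : ‖v₁‖ ≠ 0 := norm_ne_zero_iff.mpr hz1
    have hn2 : ‖v₂‖ ≠ 0 := norm_ne_zero_iff.mpr hz2
    set x : V := ‖v₁‖⁻¹ • v₁ with hxdef
    set y : V := ‖v₂‖⁻¹ • v₂ with hydef
    have hxS : x ∈ S₁ := by
      refine ⟨‖v₁‖⁻¹ • ⟨v₁, hv₁⟩, ?_, rfl⟩
      rw [mem_sphere_zero_iff_norm, norm_smul]
      simp [hn1, abs_of_nonneg (norm_nonneg v₁)]
    have hyS : y ∈ S₂ := by
      refine ⟨‖v₂‖⁻¹ • ⟨v₂, hv₂⟩, ?_, rfl⟩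
      rw [mem_sphere_zero_iff_norm, norm_smul]
      simp [hn2, abs_of_nonneg (norm_nonneg v₂)]
    have hle : |⟪x, y⟫| ≤ |⟪p.1, p.2⟫| := hmax (Set.mk_mem_prod hxS hyS)
    have hinner : ⟪x, y⟫ = ‖v₁‖⁻¹ * (‖v₂‖⁻¹ * ⟪v₁, v₂⟫) := by
      rw [hxdef, hydef, real_inner_smul_left, real_inner_smul_right]
    rw [hinner] at hle
    rw [abs_mul, abs_mul, abs_inv, abs_inv, abs_norm, abs_norm] at hle
    have h1' : 0 < ‖v₁‖ := norm_pos_iff.mpr hz1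
    have h2' : 0 < ‖v₂‖ := norm_pos_iff.mpr hz2
    calc |⟪v₁, v₂⟫| = ‖v₁‖ * ‖v₂‖ * (‖v₁‖⁻¹ * (‖v₂‖⁻¹ * |⟪v₁, v₂⟫|)) := by
          field_simp
      _ ≤ ‖v₁‖ * ‖v₂‖ * |⟪p.1, p.2⟫| := by
          apply mul_le_mul_of_nonneg_left _ (by positivity)
          exact hle
      _ = |⟪p.1, p.2⟫| * ‖v₁‖ * ‖v₂‖ := by ring
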